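/- Suppose there exists a state s† such that every action taken at s† leads to a reset state, and the reset mechanism returns the agent to s†. Then for any learning algorithm that at the initial state takes some action in a fixed nonempty subset à ⊆ A with probability at least a constant p > 0 per episode, there exists an MDP (consistent with the first initial state admitting a reset-free policy) on which the expected number of resets over K episodes is at least p·K, i.e., linear in K. -/
import Mathlib


open Finset

/-- `P` is a stochastic transition kernel. -/
def StochMat {S A : Type*} [Fintype S] (P : S → A → S → ℝ) : Prop :=
  ∀ s a, (∀ s', 0 ≤ P s a s') ∧ ∑ s', P s a s' = 1

/-- `π` is a stationary stochastic policy. -/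
def StochPol {S A : Type*} [Fintype A] (π : S → A → ℝ) : Prop :=
  ∀ s, (∀ a, 0 ≤ π s a) ∧ ∑ a, π s a = 1

/-- `survDist P π Sreset n s s'` : probability of being at `s'` after `n` steps of
`π` from `s` without having visited a reset state (including the current state). -/
noncomputable def survDist {S A : Type*} [Fintype S] [Fintype A] [DecidableEq S]
    (P : S → A → S → ℝ) (π : S → A → ℝ) (Sreset : Finset S) :
    ℕ → S → S → ℝ
  | 0, s, s' => if s ∈ Sreset then 0 else if s' = s then 1 else 0
  | n + 1, s, s' =>
      if s ∈ Sreset then 0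
      else ∑ a, π s a * ∑ t, P s a t * survDist P π Sreset n t s'

/-- Probability that an episode of horizon `H` run with `π` from `s` visits a
reset state. -/
noncomputable def resetProb {S A : Type*} [Fintype S] [Fintype A] [DecidableEq S]
    (P : S → A → S → ℝ) (π : S → A → ℝ) (Sreset : Finset S) (H : ℕ) (s : S) : ℝ :=
  1 - ∑ s', survDist P π Sreset H s s'

/-- Distribution of the initial state of episode `k`: episode `0` starts at `s11`;
if an episode resets, the next episode starts at `sdag`; otherwise it starts at the
final state of the previous episode. -/
noncomputable def startDist {S A : Type*} [Fintype S] [Fintype A] [DecidableEq S]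
    (P : S → A → S → ℝ) (Sreset : Finset S) (sdag : S)
    (πs : ℕ → S → A → ℝ) (H : ℕ) (s11 : S) : ℕ → S → ℝ
  | 0, s => if s = s11 then 1 else 0
  | k + 1, s =>
      (∑ t, startDist P Sreset sdag πs H s11 k t *
          resetProb P (πs k) Sreset H t) * (if s = sdag then 1 else 0) +
        ∑ t, startDist P Sreset sdag πs H s11 k t *
          survDist P (πs k) Sreset H t s

/-- Expected total number of resets over `K` episodes. -/
noncomputable def expectedResets {S A : Type*} [Fintype S] [Fintype A] [DecidableEq S]
    (P : S → A → S → ℝ) (Sreset : Finset S) (sdag : S)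
    (πs : ℕ → S → A → ℝ) (H : ℕ) (s11 : S) (K : ℕ) : ℝ :=
  ∑ k ∈ Finset.range K, ∑ t, startDist P Sreset sdag πs H s11 k t *
    resetProb P (πs k) Sreset H t

lemma survDist_nonneg {S A : Type*} [Fintype S] [Fintype A] [DecidableEq S]
    {P : S → A → S → ℝ} {π : S → A → ℝ} (hP : StochMat P) (hπ : StochPol π)
    (Sreset : Finset S) : ∀ n s s', 0 ≤ survDist P π Sreset n s s' := by
  intro n
  induction n with
  | zero =>
    intro s s'
    simp only [survDist]
    split_ifs <;> norm_num
  | succ n ih =>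
    intro s s'
    simp only [survDist]
    split_ifs with h
    · exact le_refl 0
    · refine Finset.sum_nonneg fun a _ => mul_nonneg ((hπ s).1 a) ?_
      exact Finset.sum_nonneg fun t _ => mul_nonneg ((hP s a).1 t) (ih t s')

lemma survDist_sum_le_one {S A : Type*} [Fintype S] [Fintype A] [DecidableEq S]
    {P : S → A → S → ℝ} {π : S → A → ℝ} (hP : StochMat P) (hπ : StochPol π)
    (Sreset : Finset S) : ∀ n s, ∑ s', survDist P π Sreset n s s' ≤ 1 := by
  intro n
  induction n with
  | zero =>
    intro s
    by_cases h : s ∈ Sreset <;> simp [survDist, h]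
  | succ n ih =>
    intro s
    by_cases h : s ∈ Sreset
    · simp [survDist, h]
    · simp only [survDist, if_neg h]
      calc ∑ s', ∑ a, π s a * ∑ t, P s a t * survDist P π Sreset n t s'
          = ∑ a, π s a * ∑ t, P s a t * ∑ s', survDist P π Sreset n t s' := by
            simp only [Finset.mul_sum]
            rw [Finset.sum_comm]
            exact Finset.sum_congr rfl fun a _ => Finset.sum_comm
        _ ≤ ∑ a, π s a * 1 := by
            refine Finset.sum_le_sum fun a _ => mul_le_mul_of_nonneg_left ?_ ((hπ s).1 a)
            calc ∑ t, P s a t * ∑ s', survDist P π Sreset n t s'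
                ≤ ∑ t, P s a t * 1 := Finset.sum_le_sum fun t _ =>
                  mul_le_mul_of_nonneg_left (ih t) ((hP s a).1 t)
              _ = 1 := by simp [(hP s a).2]
        _ = 1 := by simp [(hπ s).2]

/-- Suppose every action taken at `s†` leads to a reset state and
the reset mechanism returns the agent to `s†`. Then for any learning algorithm that
at the initial state takes some action in a fixed nonempty subset `Ã ⊆ A` with
probability at least `p > 0` per episode, there exists an MDP — consistent with the
first initial state `s₁¹` admitting a reset-free policy — on which the expected
number of resets over `K` episodes is at least `p·K`. -/
theorem exists_mdp_with_linear_resets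
    {S A : Type*} [Fintype S] [Fintype A] [DecidableEq S] [DecidableEq A]
    (s11 sdag sbar : S)
    (hne₁ : s11 ≠ sdag) (hne₂ : s11 ≠ sbar) (hne₃ : sdag ≠ sbar)
    (Atil : Finset A) (hAtil : Atil.Nonempty) (hAtil' : Atilᶜ.Nonempty)
    (p : ℝ) (hp : 0 < p) (hp1 : p ≤ 1)
    (H K : ℕ) (hH : 1 ≤ H) :
    ∃ (Sreset : Finset S) (P : S → A → S → ℝ),
      StochMat P ∧ s11 ∉ Sreset ∧ sdag ∉ Sreset ∧
      -- actions in Ã from the first initial state lead to reset states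
      (∀ a ∈ Atil, ∀ s', P s11 a s' ≠ 0 → s' ∈ Sreset) ∧
      -- every action from s† leads to a reset state
      (∀ (a : A) (s' : S), P sdag a s' ≠ 0 → s' ∈ Sreset) ∧
      -- the first initial state admits a reset-free policy
      (∃ πfree : S → A → ℝ, StochPol πfree ∧
        resetProb P πfree Sreset H s11 = 0) ∧
      -- any algorithm taking Ã at the initial state with probability ≥ p per
      -- episode incurs at least p·K expected resets
      (∀ πs : ℕ → S → A → ℝ, (∀ k, StochPol (πs k)) →
        (∀ k, p ≤ ∑ a ∈ Atil, πs k s11 a) →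
        p * K ≤ expectedResets P Sreset sdag πs H s11 K) := by
  classical
  obtain ⟨a₀, ha₀⟩ := hAtil'
  have ha₀' : a₀ ∉ Atil := Finset.mem_compl.mp ha₀
  obtain ⟨m, rfl⟩ : ∃ m, H = m + 1 := ⟨H - 1, (Nat.succ_pred_eq_of_pos hH).symm⟩
  set Sr : Finset S := {sbar} with hSr
  have hs11Sr : s11 ∉ Sr := by simp [hSr, hne₂]
  have hsdagSr : sdag ∉ Sr := by simp [hSr, hne₃]
  have hsbarSr : sbar ∈ Sr := Finset.mem_singleton_self _
  set P : S → A → S → ℝ := fun s a s' =>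
    if s = s11 ∧ a ∉ Atil then (if s' = s11 then 1 else 0)
    else (if s' = sbar then 1 else 0) with hPdef
  -- basic facts about P
  have hP11free : ∀ a ∉ Atil, ∀ t : S, P s11 a t = if t = s11 then 1 else 0 := by
    intro a ha t; simp [hPdef, ha]
  have hP11til : ∀ a ∈ Atil, ∀ t : S, P s11 a t = if t = sbar then 1 else 0 := by
    intro a ha t; simp [hPdef, ha]
  have hPdag : ∀ (a : A) (t : S), P sdag a t = if t = sbar then 1 else 0 := by
    intro a t; simp [hPdef, hne₁.symm]
  have hPstoch : StochMat P := by
    intro s a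
    constructor
    · intro s'; simp only [hPdef]; split_ifs <;> norm_num
    · by_cases h : s = s11 ∧ a ∉ Atil <;> simp [hPdef, h]
  -- survDist from sbar (a reset state) is always 0
  have hsurv_sbar : ∀ (π : S → A → ℝ) (n : ℕ) (s' : S),
      survDist P π Sr n sbar s' = 0 := by
    intro π n s'; cases n <;> simp [survDist, hsbarSr]
  -- survDist from sdag after ≥ 1 step is 0
  have hsurv_sdag : ∀ (π : S → A → ℝ) (n : ℕ) (s' : S),
      survDist P π Sr (n + 1) sdag s' = 0 := by
    intro π n s'
    simp only [survDist, if_neg hsdagSr]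
    refine Finset.sum_eq_zero fun a _ => ?_
    have : (∑ t, P sdag a t * survDist P π Sr n t s') = 0 := by
      rw [Finset.sum_eq_zero]
      intro t _
      rcases eq_or_ne t sbar with rfl | ht
      · rw [hsurv_sbar, mul_zero]
      · rw [hPdag, if_neg ht, zero_mul]
    rw [this, mul_zero]
  -- key recursion at s11
  have hstep : ∀ (π : S → A → ℝ) (n : ℕ) (s' : S),
      survDist P π Sr (n + 1) s11 s' =
        (∑ a ∈ Atilᶜ, π s11 a) * survDist P π Sr n s11 s' := by
    intro π n s'
    simp only [survDist, if_neg hs11Sr]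
    rw [← Finset.sum_add_sum_compl Atil, Finset.sum_mul]
    have h1 : ∑ a ∈ Atil, π s11 a * ∑ t, P s11 a t * survDist P π Sr n t s' = 0 := by
      refine Finset.sum_eq_zero fun a ha => ?_
      have : (∑ t, P s11 a t * survDist P π Sr n t s') = 0 := by
        rw [Finset.sum_eq_zero]
        intro t _
        rcases eq_or_ne t sbar with rfl | ht
        · rw [hsurv_sbar, mul_zero]
        · rw [hP11til a ha, if_neg ht, zero_mul]
      rw [this, mul_zero]
    have h2 : ∀ a ∈ Atilᶜ, π s11 a * ∑ t, P s11 a t * survDist P π Sr n t s'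
        = π s11 a * survDist P π Sr n s11 s' := by
      intro a ha
      congr 1
      rw [Finset.sum_eq_single s11]
      · rw [hP11free a (Finset.mem_compl.mp ha), if_pos rfl, one_mul]
      · intro t _ ht
        rw [hP11free a (Finset.mem_compl.mp ha), if_neg ht, zero_mul]
      · intro h; exact absurd (Finset.mem_univ s11) h
    rw [h1, zero_add]
    exact Finset.sum_congr rfl h2
  refine ⟨Sr, P, hPstoch, hs11Sr, hsdagSr, ?_, ?_, ?_, ?_⟩
  · -- actions in Ã lead to reset
    intro a ha s' hP'
    rw [hP11til a ha] at hP'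
    by_contra h
    have : s' ≠ sbar := fun hc => h (hc ▸ hsbarSr)
    rw [if_neg this] at hP'
    exact hP' rfl
  · -- actions from sdag lead to reset
    intro a s' hP'
    rw [hPdag] at hP'
    by_contra h
    have : s' ≠ sbar := fun hc => h (hc ▸ hsbarSr)
    rw [if_neg this] at hP'
    exact hP' rfl
  · -- reset-free policy
    refine ⟨fun _ a => if a = a₀ then 1 else 0, ?_, ?_⟩
    · intro s
      constructor
      · intro a; dsimp only; split_ifs <;> norm_num
      · simp
    · have hsum : ∀ n, ∑ s', survDist P (fun _ a => if a = a₀ then 1 else 0) Sr n s11 s' = 1 := by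
        intro n
        induction n with
        | zero => simp [survDist, hs11Sr]
        | succ n ih =>
          have hq : (∑ a ∈ Atilᶜ, if a = a₀ then (1:ℝ) else 0) = 1 := by
            rw [Finset.sum_ite_eq' Atilᶜ a₀ (fun _ => (1:ℝ)), if_pos ha₀]
          calc ∑ s', survDist P (fun _ a => if a = a₀ then 1 else 0) Sr (n+1) s11 s'
              = ∑ s', (∑ a ∈ Atilᶜ, if a = a₀ then (1:ℝ) else 0) *
                  survDist P (fun _ a => if a = a₀ then 1 else 0) Sr n s11 s' :=
                Finset.sum_congr rfl fun s' _ => hstep _ n s'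
            _ = 1 := by rw [hq]; simpa using ih
      unfold resetProb
      rw [hsum]; ring
  · -- main lower bound
    intro πs hπs hπp
    set D : ℕ → S → ℝ := startDist P Sr sdag πs (m + 1) s11 with hD
    set R : ℕ → S → ℝ := fun k => resetProb P (πs k) Sr (m + 1) with hR
    have hRnn : ∀ k t, 0 ≤ R k t := by
      intro k t
      have := survDist_sum_le_one hPstoch (hπs k) Sr (m + 1) t
      simp only [hR, resetProb]; linarith
    have hRle : ∀ k t, R k t ≤ 1 := by
      intro k t
      have h0 : 0 ≤ ∑ s', survDist P (πs k) Sr (m+1) t s' :=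
        Finset.sum_nonneg fun s' _ => survDist_nonneg hPstoch (hπs k) Sr (m+1) t s'
      simp only [hR, resetProb]; linarith
    have hq : ∀ k, ∑ a ∈ Atilᶜ, πs k s11 a ≤ 1 - p := by
      intro k
      have h1 := (hπs k s11).2
      have h2 := hπp k
      have h3 := Finset.sum_add_sum_compl Atil (πs k s11)
      linarith
    have hqnn : ∀ k, 0 ≤ ∑ a ∈ Atilᶜ, πs k s11 a := fun k =>
      Finset.sum_nonneg fun a _ => (hπs k s11).1 a
    -- reset probability from s11 is at least p
    have hR11 : ∀ k, p ≤ R k s11 := by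
      intro k
      have h1 : ∑ s', survDist P (πs k) Sr (m+1) s11 s' ≤ 1 - p := by
        have hrec : ∑ s', survDist P (πs k) Sr (m+1) s11 s'
            = (∑ a ∈ Atilᶜ, πs k s11 a) * ∑ s', survDist P (πs k) Sr m s11 s' := by
          rw [Finset.mul_sum]
          exact Finset.sum_congr rfl fun s' _ => hstep _ m s'
        rw [hrec]
        have h2 := survDist_sum_le_one hPstoch (hπs k) Sr m s11
        have h3 : 0 ≤ ∑ s', survDist P (πs k) Sr m s11 s' :=
          Finset.sum_nonneg fun s' _ => survDist_nonneg hPstoch (hπs k) Sr m s11 s'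
        calc (∑ a ∈ Atilᶜ, πs k s11 a) * ∑ s', survDist P (πs k) Sr m s11 s'
            ≤ (1 - p) * 1 := mul_le_mul (hq k) h2 h3 (by linarith)
          _ = 1 - p := mul_one _
      simp only [hR, resetProb]; linarith
    have hRdag : ∀ k, R k sdag = 1 := by
      intro k
      simp only [hR, resetProb]
      rw [Finset.sum_eq_zero fun s' _ => hsurv_sdag (πs k) m s']; ring
    -- survDist from s11 ends only at s11
    have hsupp11 : ∀ k s', s' ≠ s11 → survDist P (πs k) Sr (m+1) s11 s' = 0 := by
      intro k s' hs'
      have : ∀ n, survDist P (πs k) Sr n s11 s' = 0 := by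
        intro n
        induction n with
        | zero => simp [survDist, hs11Sr, hs']
        | succ n ih => rw [hstep, ih, mul_zero]
      exact this (m+1)
    -- properties of the start distribution
    have hDprop : ∀ k, (∀ t, 0 ≤ D k t) ∧
        (∀ t, t ≠ s11 → t ≠ sdag → D k t = 0) ∧ (∑ t, D k t = 1) := by
      intro k
      induction k with
      | zero =>
        refine ⟨fun t => ?_, fun t h1 h2 => ?_, ?_⟩
        · simp only [hD, startDist]; split_ifs <;> norm_num
        · simp [hD, startDist, h1]
        · simp [hD, startDist]
      | succ k ih =>
        obtain ⟨ihnn, ihsupp, ihsum⟩ := ih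
        have hterm : ∀ t, 0 ≤ D k t * R k t := fun t => mul_nonneg (ihnn t) (hRnn k t)
        refine ⟨fun t => ?_, fun t h1 h2 => ?_, ?_⟩
        · simp only [hD, startDist]
          refine add_nonneg (mul_nonneg (Finset.sum_nonneg fun t _ => hterm t) ?_)
            (Finset.sum_nonneg fun u _ => mul_nonneg (ihnn u)
              (survDist_nonneg hPstoch (hπs k) Sr (m+1) u t))
          split_ifs <;> norm_num
        · simp only [hD, startDist, if_neg h2, mul_zero, zero_add]
          refine Finset.sum_eq_zero fun u _ => ?_
          rcases eq_or_ne u s11 with rfl | hu1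
          · rw [hsupp11 k t h1, mul_zero]
          rcases eq_or_ne u sdag with rfl | hu2
          · rw [hsurv_sdag (πs k) m t, mul_zero]
          · have h0 := ihsupp u hu1 hu2
            rw [hD] at h0
            rw [h0, zero_mul]
        · simp only [hD, startDist]
          rw [Finset.sum_add_distrib]
          have e1 : ∑ s, (∑ t, D k t * R k t) * (if s = sdag then (1:ℝ) else 0)
              = ∑ t, D k t * R k t := by
            rw [← Finset.mul_sum]
            simp
          have e2 : ∑ s, ∑ t, D k t * survDist P (πs k) Sr (m+1) t s
              = ∑ t, D k t * ∑ s, survDist P (πs k) Sr (m+1) t s := by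
            rw [Finset.sum_comm]
            exact Finset.sum_congr rfl fun t _ => (Finset.mul_sum _ _ _).symm
          rw [e1, e2, ← Finset.sum_add_distrib]
          calc ∑ t, (D k t * R k t + D k t * ∑ s, survDist P (πs k) Sr (m+1) t s)
              = ∑ t, D k t * (R k t + ∑ s, survDist P (πs k) Sr (m+1) t s) := by
                exact Finset.sum_congr rfl fun t _ => (mul_add _ _ _).symm
            _ = ∑ t, D k t := by
                refine Finset.sum_congr rfl fun t _ => ?_
                have : R k t + ∑ s, survDist P (πs k) Sr (m+1) t s = 1 := by
                  simp only [hR, resetProb]; ring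
                rw [this, mul_one]
            _ = 1 := ihsum
    -- per-episode expected reset is at least p
    have hEp : ∀ k, p ≤ ∑ t, D k t * R k t := by
      intro k
      obtain ⟨hnn, hsupp, hsum⟩ := hDprop k
      have hpair : ({s11, sdag} : Finset S) ⊆ Finset.univ := Finset.subset_univ _
      have e : ∑ t, D k t * R k t = D k s11 * R k s11 + D k sdag * R k sdag := by
        rw [← Finset.sum_subset hpair]
        · rw [Finset.sum_pair hne₁]
        · intro t _ ht
          simp only [Finset.mem_insert, Finset.mem_singleton, not_or] at ht
          rw [hsupp t ht.1 ht.2, zero_mul]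
      have esum : D k s11 + D k sdag = 1 := by
        rw [← hsum, ← Finset.sum_subset hpair]
        · rw [Finset.sum_pair hne₁]
        · intro t _ ht
          simp only [Finset.mem_insert, Finset.mem_singleton, not_or] at ht
          exact hsupp t ht.1 ht.2
      rw [e]
      have h1 : D k s11 * p ≤ D k s11 * R k s11 :=
        mul_le_mul_of_nonneg_left (hR11 k) (hnn s11)
      have h2 : D k sdag * p ≤ D k sdag * R k sdag := by
        rw [hRdag k]
        calc D k sdag * p ≤ D k sdag * 1 :=
              mul_le_mul_of_nonneg_left hp1 (hnn sdag)
          _ = D k sdag * 1 := rfl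
      nlinarith [hnn s11, hnn sdag]
    -- sum over episodes
    unfold expectedResets
    calc p * K = ∑ _k ∈ Finset.range K, p := by
          rw [Finset.sum_const, Finset.card_range, nsmul_eq_mul]; ring
      _ ≤ ∑ k ∈ Finset.range K, ∑ t, D k t * R k t :=
          Finset.sum_le_sum fun k _ => hEp k
      _ = ∑ k ∈ Finset.range K, ∑ t, startDist P Sr sdag πs (m+1) s11 k t *
            resetProb P (πs k) Sr (m+1) t := rfl
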